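/- arXiv:1010.5223 — 2 statements merged into one kernel-verified Lean document; each statement's English description precedes it below -/
import Mathlib

section
/- Let a, b, τ > 0, s ∈ ℝ, σ > 0, and y ∈ ℝ. Define the joint density on ℝ × (0,1): f(β, κ) = N(y; β, σ²) N(β; 0, σ²(1/κ − 1)) π_{a,b,τ,s}(κ). Then the posterior mean of β satisfies [∬ β f(β,κ) dβ dκ] / [∬ f(β,κ) dβ dκ] = (1 − E(κ | y)) · y, where E(κ | y) = [∬ κ f(β,κ) dβ dκ] / [∬ f(β,κ) dβ dκ]. -/
open MeasureTheory Set

/-- The unnormalized hypergeometric-beta kernel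
`κ^{a−1} (1−κ)^{b−1} {1/τ² + (1 − 1/τ²)κ}^{−1} e^{−sκ}`. -/
noncomputable def hbKer (a b τ s κ : ℝ) : ℝ :=
  κ ^ (a - 1) * (1 - κ) ^ (b - 1) * (1 / τ ^ 2 + (1 - 1 / τ ^ 2) * κ)⁻¹ *
    Real.exp (-(s * κ))

/-- The normalizing constant `C(a,b,τ,s)`. -/
noncomputable def hbC (a b τ s : ℝ) : ℝ :=
  ∫ κ in Set.Ioo (0 : ℝ) 1, hbKer a b τ s κ

/-- The hypergeometric-beta density `π_{a,b,τ,s}` on `(0,1)`. -/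
noncomputable def hbPdf (a b τ s κ : ℝ) : ℝ :=
  (hbC a b τ s)⁻¹ * hbKer a b τ s κ

/-- The normal density with mean `μ` and variance `v`. -/
noncomputable def normPdf (y μ v : ℝ) : ℝ :=
  (2 * Real.pi * v) ^ (-(1 : ℝ) / 2) * Real.exp (-((y - μ) ^ 2) / (2 * v))

/-- The joint density `f(β, κ) = N(y; β, σ²) N(β; 0, σ²(1/κ − 1)) π_{a,b,τ,s}(κ)`. -/
noncomputable def jointF (a b τ s σ y β κ : ℝ) : ℝ :=
  normPdf y β (σ ^ 2) * normPdf β 0 (σ ^ 2 * (1 / κ - 1)) * hbPdf a b τ s κ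


lemma normPdf_pos {v : ℝ} (hv : 0 < v) (y μ : ℝ) : 0 < normPdf y μ v := by
  unfold normPdf
  have : 0 < 2 * Real.pi * v := by positivity
  positivity

lemma normPdf_mul (y β : ℝ) {v1 v2 : ℝ} (h1 : 0 < v1) (h2 : 0 < v2) :
    normPdf y β v1 * normPdf β 0 v2 =
      normPdf y 0 (v1 + v2) * normPdf β (y * v2 / (v1 + v2)) (v1 * v2 / (v1 + v2)) := by
  have h12 : 0 < v1 + v2 := by linarith
  unfold normPdf
  rw [mul_mul_mul_comm, mul_mul_mul_comm ((2 * Real.pi * (v1 + v2)) ^ (-(1:ℝ)/2)),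
    ← Real.mul_rpow (by positivity) (by positivity),
    ← Real.mul_rpow (by positivity) (by positivity),
    ← Real.exp_add, ← Real.exp_add]
  congr 2
  · field_simp
  · field_simp
    ring

lemma normPdf_fun_eq (m : ℝ) {w : ℝ} (hw : 0 < w) :
    (fun x => normPdf x m w) = ProbabilityTheory.gaussianPDFReal m ⟨w, hw.le⟩ := by
  ext x
  unfold normPdf ProbabilityTheory.gaussianPDFReal
  have h : (0:ℝ) ≤ 2 * Real.pi * w := by positivity
  rw [show (-(1:ℝ)/2) = -(1/2) by norm_num, Real.rpow_neg h, Real.sqrt_eq_rpow]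
  norm_num
  rfl

lemma integral_normPdf {w : ℝ} (hw : 0 < w) (m : ℝ) : ∫ x : ℝ, normPdf x m w = 1 := by
  rw [show (fun x => normPdf x m w) = _ from normPdf_fun_eq m hw]
  exact ProbabilityTheory.integral_gaussianPDFReal_eq_one m (by intro h; have h' := congrArg NNReal.toReal h; simp at h'; exact hw.ne' h')

lemma integrable_normPdf {w : ℝ} (hw : 0 < w) (m : ℝ) :
    Integrable (fun x => normPdf x m w) := by
  rw [normPdf_fun_eq m hw]
  exact ProbabilityTheory.integrable_gaussianPDFReal m _

lemma integrable_mul_normPdf {w : ℝ} (hw : 0 < w) (m : ℝ) :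
    Integrable (fun x => x * normPdf x m w) := by
  have key : Integrable (fun x : ℝ => x * normPdf x 0 w) := by
    have heq : (fun x : ℝ => x * normPdf x 0 w)
        = fun x : ℝ => (2 * Real.pi * w) ^ (-(1:ℝ)/2) * (x * Real.exp (-(1/(2*w)) * x ^ 2)) := by
      funext x
      unfold normPdf
      rw [show -((x - (0:ℝ)) ^ 2) / (2 * w) = -(1/(2*w)) * x ^ 2 by ring]
      ring
    rw [heq]
    exact (integrable_mul_exp_neg_mul_sq (by positivity)).const_mul _
  have hshift := key.comp_sub_right m
  have heq : (fun x : ℝ => (x - m) * normPdf (x - m) 0 w)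
      = fun x : ℝ => x * normPdf x m w - m * normPdf x m w := by
    funext x
    unfold normPdf
    rw [show ((x - m) - (0:ℝ)) ^ 2 = (x - m) ^ 2 by ring]
    ring
  have := (hshift.congr (by rw [heq])).add ((integrable_normPdf hw m).const_mul m)
  exact this.congr (Filter.Eventually.of_forall fun x => by simp)

lemma integral_mul_normPdf {w : ℝ} (hw : 0 < w) (m : ℝ) :
    ∫ x : ℝ, x * normPdf x m w = m := by
  have hzero : ∫ x : ℝ, x * normPdf x 0 w = 0 := by
    have h1 := MeasureTheory.integral_neg_eq_self (fun x : ℝ => x * normPdf x 0 w) volume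
    have h2 : ∀ x : ℝ, (-x) * normPdf (-x) 0 w = -(x * normPdf x 0 w) := by
      intro x
      unfold normPdf
      rw [show ((-x : ℝ) - 0) ^ 2 = (x - 0) ^ 2 by ring]
      ring
    simp_rw [h2, integral_neg] at h1
    linarith
  have hshift := MeasureTheory.integral_add_right_eq_self (μ := volume) (fun x : ℝ => x * normPdf x m w) m
  rw [← hshift]
  have heq : ∀ x : ℝ, (x + m) * normPdf (x + m) m w
      = x * normPdf x 0 w + m * normPdf x 0 w := by
    intro x
    unfold normPdf
    rw [show ((x + m) - m) ^ 2 = (x - (0:ℝ)) ^ 2 by ring]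
    ring
  simp_rw [heq]
  rw [integral_add (by
    have := integrable_mul_normPdf hw 0
    exact this) ((integrable_normPdf hw 0).const_mul m), hzero,
    MeasureTheory.integral_const_mul, integral_normPdf hw 0]
  ring


lemma betaNorm_integrableOn {a b : ℝ} (ha : 0 < a) (hb : 0 < b) :
    IntegrableOn (fun x : ℝ => ‖((x:ℂ) ^ ((a:ℂ) - 1) * ((1:ℂ) - (x:ℂ)) ^ ((b:ℂ) - 1))‖)
      (Ioo (0:ℝ) 1) := by
  have h := Complex.betaIntegral_convergent (u := (a:ℂ)) (v := (b:ℂ)) (by simpa) (by simpa)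
  have h2 := (intervalIntegrable_iff_integrableOn_Ioo_of_le (by norm_num)).mp h
  exact h2.norm

lemma betaNorm_eq {a b x : ℝ} (hx : x ∈ Ioo (0:ℝ) 1) :
    ‖((x:ℂ) ^ ((a:ℂ) - 1) * ((1:ℂ) - (x:ℂ)) ^ ((b:ℂ) - 1))‖
      = x ^ (a - 1) * (1 - x) ^ (b - 1) := by
  rw [norm_mul]
  rw [show ((1:ℂ) - (x:ℂ)) = ((1 - x : ℝ) : ℂ) by push_cast; ring]
  rw [
    Complex.norm_cpow_eq_rpow_re_of_pos hx.1, Complex.norm_cpow_eq_rpow_re_of_pos (by linarith [hx.2])]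
  norm_num

lemma lin_pos {τ κ : ℝ} (hτ : 0 < τ) (hκ : κ ∈ Ioo (0:ℝ) 1) :
    0 < 1 / τ ^ 2 + (1 - 1 / τ ^ 2) * κ := by
  rw [show 1 / τ ^ 2 + (1 - 1 / τ ^ 2) * κ = (1 - κ) / τ ^ 2 + κ by ring]
  have h1 : 0 < (1 - κ) / τ ^ 2 := by
    apply div_pos (by linarith [hκ.2]) (by positivity)
  linarith [hκ.1]

lemma lin_ge {τ κ : ℝ} (hτ : 0 < τ) (hκ : κ ∈ Ioo (0:ℝ) 1) :
    min (1 / τ ^ 2) 1 ≤ 1 / τ ^ 2 + (1 - 1 / τ ^ 2) * κ := by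
  rcases le_total (1 / τ ^ 2) 1 with h | h
  · rw [min_eq_left h]; nlinarith [hκ.1, hκ.2]
  · rw [min_eq_right h]; nlinarith [hκ.1, hκ.2]

lemma hbKer_pos {a b τ s : ℝ} (hτ : 0 < τ) {κ : ℝ} (hκ : κ ∈ Ioo (0:ℝ) 1) :
    0 < hbKer a b τ s κ := by
  unfold hbKer
  have h1 := lin_pos hτ hκ
  have h2 : (0:ℝ) < κ := hκ.1
  have h3 : (0:ℝ) < 1 - κ := by linarith [hκ.2]
  positivity

lemma hbKer_integrableOn {a b τ : ℝ} (s : ℝ) (ha : 0 < a) (hb : 0 < b) (hτ : 0 < τ) :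
    IntegrableOn (hbKer a b τ s) (Ioo (0:ℝ) 1) := by
  set C := (min (1 / τ ^ 2) 1)⁻¹ * Real.exp |s| with hC
  have hCpos : 0 < C := by
    have : 0 < min (1 / τ ^ 2) 1 := lt_min (by positivity) one_pos
    positivity
  apply Integrable.mono' ((betaNorm_integrableOn ha hb).const_mul C)
  · apply ContinuousOn.aestronglyMeasurable _ measurableSet_Ioo
    unfold hbKer
    apply ContinuousOn.mul
    apply ContinuousOn.mul
    apply ContinuousOn.mul
    · exact continuousOn_id.rpow_const (fun x hx => Or.inl hx.1.ne')
    · exact (continuousOn_const.sub continuousOn_id).rpow_const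
        (fun x hx => Or.inl (by intro h; change (1:ℝ) - x = 0 at h; nlinarith [hx.2, sub_eq_zero.mp h]))
    · exact (continuousOn_const.add (continuousOn_const.mul continuousOn_id)).inv₀
        (fun x hx => (lin_pos hτ hx).ne')
    · exact (Real.continuous_exp.comp (continuous_const.mul continuous_id).neg).continuousOn
  · filter_upwards [ae_restrict_mem measurableSet_Ioo] with κ hκ
    rw [Real.norm_of_nonneg (hbKer_pos hτ hκ).le, betaNorm_eq hκ]
    unfold hbKer
    have hmin : 0 < min (1 / τ ^ 2) 1 := lt_min (by positivity) one_pos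
    have hP : 0 ≤ κ ^ (a - 1) * (1 - κ) ^ (b - 1) := by
      have h2 : (0:ℝ) < κ := hκ.1
      have h3 : (0:ℝ) < 1 - κ := by linarith [hκ.2]
      positivity
    have hinv : (1 / τ ^ 2 + (1 - 1 / τ ^ 2) * κ)⁻¹ ≤ (min (1 / τ ^ 2) 1)⁻¹ :=
      inv_anti₀ hmin (lin_ge hτ hκ)
    have hexp : Real.exp (-(s * κ)) ≤ Real.exp |s| := by
      apply Real.exp_le_exp.mpr
      calc -(s * κ) ≤ |s * κ| := neg_le_abs _
        _ = |s| * |κ| := abs_mul s κ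
        _ ≤ |s| * 1 := by
            apply mul_le_mul_of_nonneg_left _ (abs_nonneg s)
            rw [abs_of_pos hκ.1]; exact hκ.2.le
        _ = |s| := mul_one _
    calc κ ^ (a - 1) * (1 - κ) ^ (b - 1) * (1 / τ ^ 2 + (1 - 1 / τ ^ 2) * κ)⁻¹ *
          Real.exp (-(s * κ))
        ≤ κ ^ (a - 1) * (1 - κ) ^ (b - 1) * (min (1 / τ ^ 2) 1)⁻¹ * Real.exp |s| := by
          apply mul_le_mul (mul_le_mul_of_nonneg_left hinv hP) hexp (Real.exp_pos _).le
          positivity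
      _ = C * (κ ^ (a - 1) * (1 - κ) ^ (b - 1)) := by rw [hC]; ring

section Helpers

variable {a b τ s : ℝ}

lemma hbC_pos (ha : 0 < a) (hb : 0 < b) (hτ : 0 < τ) (s : ℝ) : 0 < hbC a b τ s := by
  rw [hbC]
  rw [setIntegral_pos_iff_support_of_nonneg_ae]
  · apply lt_of_lt_of_le _ (measure_mono (show Ioo (0:ℝ) 1 ⊆ Function.support (hbKer a b τ s) ∩ Ioo 0 1 from
      fun κ hκ => ⟨(hbKer_pos hτ hκ).ne', hκ⟩))
    rw [Real.volume_Ioo]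
    norm_num
  · filter_upwards [ae_restrict_mem measurableSet_Ioo] with κ hκ
    exact (hbKer_pos hτ hκ).le
  · exact hbKer_integrableOn s ha hb hτ

lemma hbPdf_pos (ha : 0 < a) (hb : 0 < b) (hτ : 0 < τ) {κ : ℝ} (hκ : κ ∈ Ioo (0:ℝ) 1) :
    0 < hbPdf a b τ s κ :=
  mul_pos (inv_pos.mpr (hbC_pos ha hb hτ s)) (hbKer_pos hτ hκ)

lemma hbPdf_integrableOn (ha : 0 < a) (hb : 0 < b) (hτ : 0 < τ) (s : ℝ) :
    IntegrableOn (hbPdf a b τ s) (Ioo (0:ℝ) 1) :=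
  (hbKer_integrableOn s ha hb hτ).const_mul _

end Helpers


/-- The marginal (in `κ`) integrand: `N(y;0,σ²/κ) π(κ)`. -/
noncomputable def Gfun (a b τ s σ y κ : ℝ) : ℝ :=
  normPdf y 0 (σ ^ 2 + σ ^ 2 * (1 / κ - 1)) * hbPdf a b τ s κ

section Inner

variable {a b τ s σ y : ℝ}

lemma var2_pos (hσ : 0 < σ) {κ : ℝ} (hκ : κ ∈ Ioo (0:ℝ) 1) :
    0 < σ ^ 2 * (1 / κ - 1) := by
  have h1 : 1 < 1 / κ := (one_lt_div hκ.1).mpr hκ.2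
  have h2 : 0 < σ ^ 2 := by positivity
  nlinarith

lemma jointF_eq (hσ : 0 < σ) {κ : ℝ} (hκ : κ ∈ Ioo (0:ℝ) 1) (β : ℝ) :
    jointF a b τ s σ y β κ =
      Gfun a b τ s σ y κ *
        normPdf β (y * (σ ^ 2 * (1 / κ - 1)) / (σ ^ 2 + σ ^ 2 * (1 / κ - 1)))
          (σ ^ 2 * (σ ^ 2 * (1 / κ - 1)) / (σ ^ 2 + σ ^ 2 * (1 / κ - 1))) := by
  unfold jointF Gfun
  rw [normPdf_mul y β (by positivity) (var2_pos hσ hκ)]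
  ring

lemma inner_den (hσ : 0 < σ) {κ : ℝ} (hκ : κ ∈ Ioo (0:ℝ) 1) :
    (∫ β : ℝ, jointF a b τ s σ y β κ) = Gfun a b τ s σ y κ := by
  have hv2 := var2_pos hσ hκ
  have hw : 0 < σ ^ 2 * (σ ^ 2 * (1 / κ - 1)) / (σ ^ 2 + σ ^ 2 * (1 / κ - 1)) := by positivity
  simp_rw [jointF_eq hσ hκ]
  rw [MeasureTheory.integral_const_mul, integral_normPdf hw, mul_one]

lemma inner_beta (hσ : 0 < σ) {κ : ℝ} (hκ : κ ∈ Ioo (0:ℝ) 1) :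
    (∫ β : ℝ, β * jointF a b τ s σ y β κ) = ((1 - κ) * y) * Gfun a b τ s σ y κ := by
  have hv2 := var2_pos hσ hκ
  have hw : 0 < σ ^ 2 * (σ ^ 2 * (1 / κ - 1)) / (σ ^ 2 + σ ^ 2 * (1 / κ - 1)) := by positivity
  have key : ∀ β : ℝ, β * jointF a b τ s σ y β κ =
      Gfun a b τ s σ y κ *
        (β * normPdf β (y * (σ ^ 2 * (1 / κ - 1)) / (σ ^ 2 + σ ^ 2 * (1 / κ - 1)))
          (σ ^ 2 * (σ ^ 2 * (1 / κ - 1)) / (σ ^ 2 + σ ^ 2 * (1 / κ - 1)))) := by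
    intro β
    rw [jointF_eq hσ hκ β]
    ring
  simp_rw [key]
  rw [MeasureTheory.integral_const_mul, integral_mul_normPdf hw]
  have hm : y * (σ ^ 2 * (1 / κ - 1)) / (σ ^ 2 + σ ^ 2 * (1 / κ - 1)) = (1 - κ) * y := by
    have hκ0 : (κ : ℝ) ≠ 0 := hκ.1.ne'
    have hσ0 : (σ : ℝ) ≠ 0 := hσ.ne'
    rw [div_eq_iff (show (0:ℝ) < σ ^ 2 + σ ^ 2 * (1 / κ - 1) from by positivity).ne']
    field_simp
    ring
  rw [hm]
  ring

lemma inner_kappa (hσ : 0 < σ) {κ : ℝ} (hκ : κ ∈ Ioo (0:ℝ) 1) :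
    (∫ β : ℝ, κ * jointF a b τ s σ y β κ) = κ * Gfun a b τ s σ y κ := by
  rw [MeasureTheory.integral_const_mul, inner_den hσ hκ]

lemma Gfun_pos (ha : 0 < a) (hb : 0 < b) (hτ : 0 < τ) (hσ : 0 < σ) {κ : ℝ}
    (hκ : κ ∈ Ioo (0:ℝ) 1) : 0 < Gfun a b τ s σ y κ := by
  have hv2 := var2_pos hσ hκ
  exact mul_pos (normPdf_pos (by positivity) y 0) (hbPdf_pos ha hb hτ hκ)

lemma normPdf_le (hσ : 0 < σ) {κ : ℝ} (hκ : κ ∈ Ioo (0:ℝ) 1) :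
    normPdf y 0 (σ ^ 2 + σ ^ 2 * (1 / κ - 1)) ≤ (2 * Real.pi * σ ^ 2) ^ (-(1:ℝ)/2) := by
  have hv2 := var2_pos hσ hκ
  have ht : (0:ℝ) < σ ^ 2 + σ ^ 2 * (1 / κ - 1) := by positivity
  unfold normPdf
  have h1 : (2 * Real.pi * (σ ^ 2 + σ ^ 2 * (1 / κ - 1))) ^ (-(1:ℝ)/2)
      ≤ (2 * Real.pi * σ ^ 2) ^ (-(1:ℝ)/2) := by
    apply Real.rpow_le_rpow_of_nonpos (by positivity) _ (by norm_num)
    nlinarith [Real.pi_pos]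
  have h2 : Real.exp (-((y - 0) ^ 2) / (2 * (σ ^ 2 + σ ^ 2 * (1 / κ - 1)))) ≤ 1 := by
    rw [Real.exp_le_one_iff]
    apply div_nonpos_of_nonpos_of_nonneg (by nlinarith [sq_nonneg (y - 0)]) (by positivity)
  calc (2 * Real.pi * (σ ^ 2 + σ ^ 2 * (1 / κ - 1))) ^ (-(1:ℝ)/2) *
        Real.exp (-((y - 0) ^ 2) / (2 * (σ ^ 2 + σ ^ 2 * (1 / κ - 1))))
      ≤ (2 * Real.pi * σ ^ 2) ^ (-(1:ℝ)/2) * 1 := by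
        apply mul_le_mul h1 h2 (Real.exp_pos _).le (by positivity)
    _ = (2 * Real.pi * σ ^ 2) ^ (-(1:ℝ)/2) := mul_one _

lemma Gfun_aesm (ha : 0 < a) (hb : 0 < b) (hτ : 0 < τ) (hσ : 0 < σ) :
    AEStronglyMeasurable (Gfun a b τ s σ y) (volume.restrict (Ioo (0:ℝ) 1)) := by
  apply AEStronglyMeasurable.mul _ (hbPdf_integrableOn ha hb hτ s).aestronglyMeasurable
  apply ContinuousOn.aestronglyMeasurable _ measurableSet_Ioo
  have htc : ContinuousOn (fun κ : ℝ => σ ^ 2 + σ ^ 2 * (1 / κ - 1)) (Ioo (0:ℝ) 1) := by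
    apply continuousOn_const.add
    apply continuousOn_const.mul
    apply ContinuousOn.sub _ continuousOn_const
    exact continuousOn_const.div continuousOn_id (fun x hx => hx.1.ne')
  have htpos : ∀ x ∈ Ioo (0:ℝ) 1, (0:ℝ) < σ ^ 2 + σ ^ 2 * (1 / x - 1) := by
    intro x hx
    have := var2_pos hσ hx
    positivity
  unfold normPdf
  apply ContinuousOn.mul
  · exact ((continuousOn_const.mul htc).rpow_const
      (fun x hx => Or.inl (by have := htpos x hx; exact (mul_pos (by positivity : (0:ℝ) < 2 * Real.pi) this).ne')))
  · exact (Real.continuous_exp.comp_continuousOn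
      ((continuousOn_const.div (continuousOn_const.mul htc)
        (fun x hx => by have := htpos x hx; positivity)))) 

end Inner


theorem hb_posterior_mean_is_shrinkage_rule (a b τ s σ y : ℝ) (ha : 0 < a) (hb : 0 < b)
    (hτ : 0 < τ) (hσ : 0 < σ) :
    (∫ κ in Set.Ioo (0 : ℝ) 1, ∫ β : ℝ, β * jointF a b τ s σ y β κ) /
        (∫ κ in Set.Ioo (0 : ℝ) 1, ∫ β : ℝ, jointF a b τ s σ y β κ) =
      (1 - (∫ κ in Set.Ioo (0 : ℝ) 1, ∫ β : ℝ, κ * jointF a b τ s σ y β κ) /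
            (∫ κ in Set.Ioo (0 : ℝ) 1, ∫ β : ℝ, jointF a b τ s σ y β κ)) * y := by
  have hG : IntegrableOn (Gfun a b τ s σ y) (Ioo (0:ℝ) 1) := by
    apply Integrable.mono' ((hbPdf_integrableOn ha hb hτ s).const_mul
      ((2 * Real.pi * σ ^ 2) ^ (-(1:ℝ)/2))) (Gfun_aesm ha hb hτ hσ)
    filter_upwards [ae_restrict_mem measurableSet_Ioo] with κ hκ
    rw [Real.norm_of_nonneg (Gfun_pos ha hb hτ hσ hκ).le]
    exact mul_le_mul_of_nonneg_right (normPdf_le hσ hκ) (hbPdf_pos ha hb hτ hκ).le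
  have hκG : IntegrableOn (fun κ => κ * Gfun a b τ s σ y κ) (Ioo (0:ℝ) 1) := by
    apply Integrable.mono' ((hbPdf_integrableOn ha hb hτ s).const_mul
      ((2 * Real.pi * σ ^ 2) ^ (-(1:ℝ)/2)))
      ((measurable_id.aestronglyMeasurable).mul (Gfun_aesm ha hb hτ hσ))
    filter_upwards [ae_restrict_mem measurableSet_Ioo] with κ hκ
    have hGp := Gfun_pos (s := s) (y := y) ha hb hτ hσ hκ
    show ‖κ * Gfun a b τ s σ y κ‖ ≤ (2 * Real.pi * σ ^ 2) ^ (-(1:ℝ)/2) * hbPdf a b τ s κ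
    rw [Real.norm_of_nonneg (mul_nonneg hκ.1.le hGp.le)]
    calc κ * Gfun a b τ s σ y κ ≤ 1 * Gfun a b τ s σ y κ :=
          mul_le_mul_of_nonneg_right hκ.2.le hGp.le
      _ = Gfun a b τ s σ y κ := one_mul _
      _ ≤ (2 * Real.pi * σ ^ 2) ^ (-(1:ℝ)/2) * hbPdf a b τ s κ :=
          mul_le_mul_of_nonneg_right (normPdf_le hσ hκ) (hbPdf_pos ha hb hτ hκ).le
  have hD : 0 < ∫ κ in Ioo (0:ℝ) 1, Gfun a b τ s σ y κ := by
    rw [setIntegral_pos_iff_support_of_nonneg_ae]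
    · apply lt_of_lt_of_le _ (measure_mono (show Ioo (0:ℝ) 1 ⊆
        Function.support (Gfun a b τ s σ y) ∩ Ioo 0 1 from
        fun κ hκ => ⟨(Gfun_pos ha hb hτ hσ hκ).ne', hκ⟩))
      rw [Real.volume_Ioo]
      norm_num
    · filter_upwards [ae_restrict_mem measurableSet_Ioo] with κ hκ
      exact (Gfun_pos ha hb hτ hσ hκ).le
    · exact hG
  rw [setIntegral_congr_fun measurableSet_Ioo (fun κ hκ => inner_den hσ hκ),
    setIntegral_congr_fun measurableSet_Ioo (fun κ hκ => inner_beta hσ hκ),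
    setIntegral_congr_fun measurableSet_Ioo (fun κ hκ => inner_kappa hσ hκ)]
  have hsplit : (∫ κ in Ioo (0:ℝ) 1, ((1 - κ) * y) * Gfun a b τ s σ y κ)
      = y * (∫ κ in Ioo (0:ℝ) 1, Gfun a b τ s σ y κ)
        - y * (∫ κ in Ioo (0:ℝ) 1, κ * Gfun a b τ s σ y κ) := by
    rw [show (fun κ => ((1 - κ) * y) * Gfun a b τ s σ y κ)
        = fun κ => y * Gfun a b τ s σ y κ - y * (κ * Gfun a b τ s σ y κ) from
        funext fun κ => by ring]
    rw [integral_sub (hG.const_mul y) (hκG.const_mul y),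
      MeasureTheory.integral_const_mul, MeasureTheory.integral_const_mul]
  rw [hsplit]
  field_simp [hD.ne']
end

section
/- Let τ > 0. If λ is a random variable on (0,∞) with the half-Cauchy density 2τ/(π(τ² + λ²)), then κ = 1/(1 + λ²) has density (πτ)^{−1} κ^{−1/2} (1−κ)^{−1/2} {1/τ² + (1 − 1/τ²)κ}^{−1} on (0,1); that is, κ has the hypergeometric-beta density π_{1/2, 1/2, τ, 0}, and in particular C(1/2, 1/2, τ, 0) = πτ. -/
open MeasureTheory Set

open Real

noncomputable def hcF (l : ℝ) : ℝ := 1 / (1 + l ^ 2)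
noncomputable def hcF' (l : ℝ) : ℝ := -(2 * l) / (1 + l ^ 2) ^ 2

lemma hcF_hasDeriv (l : ℝ) : HasDerivAt hcF (hcF' l) l := by
  have h : HasDerivAt (fun l : ℝ => 1 + l ^ 2) (2 * l) l := by
    simpa using (hasDerivAt_pow 2 l).const_add 1
  have hne : (1 + l ^ 2) ≠ 0 := by positivity
  have h2 := h.inv hne
  have he : hcF = fun l : ℝ => (1 + l ^ 2)⁻¹ := by funext x; simp [hcF, one_div]
  rw [he, hcF']
  exact h2

lemma hcF_inj : InjOn hcF (Ioi (0:ℝ)) := by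
  intro a ha b hb hab
  simp only [hcF, one_div, inv_inj] at hab
  have : a ^ 2 = b ^ 2 := by linarith
  have : a = b ∨ a = -b := sq_eq_sq_iff_eq_or_eq_neg.mp this
  rcases this with h | h
  · exact h
  · simp only [mem_Ioi] at ha hb; nlinarith

lemma hcF_image : hcF '' (Ioi (0:ℝ)) = Ioo (0:ℝ) 1 := by
  ext κ
  constructor
  · rintro ⟨l, hl, rfl⟩
    simp only [mem_Ioi] at hl
    have h1 : (0:ℝ) < 1 + l ^ 2 := by positivity
    constructor
    · simp only [hcF]; positivity
    · rw [hcF, div_lt_one h1]; nlinarith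
  · rintro ⟨h0, h1⟩
    refine ⟨Real.sqrt (1 / κ - 1), ?_, ?_⟩
    · simp only [mem_Ioi]
      apply Real.sqrt_pos.mpr
      rw [sub_pos, lt_div_iff₀ h0]; linarith
    · have hnn : 0 ≤ 1 / κ - 1 := by
        rw [sub_nonneg, le_div_iff₀ h0]; linarith
      rw [hcF, Real.sq_sqrt hnn]
      field_simp
      ring

noncomputable def hcSrc (τ l : ℝ) : ℝ := 2 * τ / (Real.pi * (τ ^ 2 + l ^ 2))
noncomputable def hcTgt (τ κ : ℝ) : ℝ :=
  (Real.pi * τ)⁻¹ * κ ^ (-(1 : ℝ) / 2) * (1 - κ) ^ (-(1 : ℝ) / 2) *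
    (1 / τ ^ 2 + (1 - 1 / τ ^ 2) * κ)⁻¹

lemma rpow_neg_half (x : ℝ) (hx : 0 < x) : x ^ (-(1 : ℝ) / 2) = (Real.sqrt x)⁻¹ := by
  rw [neg_div, Real.rpow_neg hx.le, ← Real.sqrt_eq_rpow]

lemma key_pointwise {τ : ℝ} (hτ : 0 < τ) {l : ℝ} (hl : 0 < l) :
    |hcF' l| * hcTgt τ (hcF l) = hcSrc τ l := by
  have h1 : (0:ℝ) < 1 + l ^ 2 := by positivity
  set c := Real.sqrt (1 + l ^ 2) with hc
  have hc0 : 0 < c := Real.sqrt_pos.mpr h1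
  have hc2 : c ^ 2 = 1 + l ^ 2 := Real.sq_sqrt h1.le
  have hκ : hcF l = 1 / (1 + l ^ 2) := rfl
  have hκpos : 0 < hcF l := by rw [hκ]; positivity
  have h1κ : 1 - hcF l = l ^ 2 / (1 + l ^ 2) := by rw [hκ]; field_simp; ring
  have h1κpos : 0 < 1 - hcF l := by rw [h1κ]; positivity
  have e1 : (hcF l) ^ (-(1 : ℝ) / 2) = c := by
    rw [rpow_neg_half _ hκpos, hκ, one_div, Real.sqrt_inv, inv_inv]
  have e2 : (1 - hcF l) ^ (-(1 : ℝ) / 2) = c / l := by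
    rw [rpow_neg_half _ h1κpos, h1κ, Real.sqrt_div (by positivity) _,
      Real.sqrt_sq hl.le, ← hc]
    rw [inv_div]
  have e3 : |hcF' l| = 2 * l / (1 + l ^ 2) ^ 2 := by
    rw [hcF', abs_div, abs_neg, abs_of_nonneg (by positivity : (0:ℝ) ≤ 2 * l),
      abs_of_nonneg (by positivity : (0:ℝ) ≤ (1 + l ^ 2) ^ 2)]
  have e4 : 1 / τ ^ 2 + (1 - 1 / τ ^ 2) * hcF l = (τ ^ 2 + l ^ 2) / (τ ^ 2 * (1 + l ^ 2)) := by
    rw [hκ]; field_simp; ring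
  rw [hcTgt, e1, e2, e3, e4, hcSrc]
  have hπ : Real.pi ≠ 0 := Real.pi_ne_zero
  have hτl : (0:ℝ) < τ ^ 2 + l ^ 2 := by positivity
  field_simp
  linear_combination hc2

lemma lintegral_image_1d {s : Set ℝ} {f f' : ℝ → ℝ}
    (hs : MeasurableSet s) (hf' : ∀ x ∈ s, HasDerivWithinAt f (f' x) s x)
    (hf : InjOn f s) (g : ℝ → ENNReal) :
    ∫⁻ x in f '' s, g x = ∫⁻ x in s, ENNReal.ofReal |f' x| * g (f x) := by
  simpa only [ContinuousLinearMap.det_toSpanSingleton] using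
    lintegral_image_eq_lintegral_abs_det_fderiv_mul volume hs
      (fun x hx => (hf' x hx).hasFDerivWithinAt) hf g

lemma hcF_continuous : Continuous hcF := by
  apply continuous_const.div (by continuity)
  intro l; positivity

lemma hcF_measurable : Measurable hcF := hcF_continuous.measurable

lemma cov_key {τ : ℝ} (hτ : 0 < τ) {s : Set ℝ} (hs : MeasurableSet s) :
    ∫⁻ κ in Ioo (0:ℝ) 1 ∩ s, ENNReal.ofReal (hcTgt τ κ) =
    ∫⁻ l in Ioi (0:ℝ) ∩ hcF ⁻¹' s, ENNReal.ofReal (hcSrc τ l) := by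
  have hA : MeasurableSet (Ioi (0:ℝ) ∩ hcF ⁻¹' s) :=
    measurableSet_Ioi.inter (hcF_measurable hs)
  have himg : hcF '' (Ioi (0:ℝ) ∩ hcF ⁻¹' s) = Ioo (0:ℝ) 1 ∩ s := by
    rw [image_inter_preimage, hcF_image]
  rw [← himg, lintegral_image_1d hA
    (fun x _ => (hcF_hasDeriv x).hasDerivWithinAt) (hcF_inj.mono inter_subset_left) _]
  apply setLIntegral_congr_fun hA
  intro l hl; beta_reduce
  rw [← ENNReal.ofReal_mul (abs_nonneg _), key_pointwise hτ hl.1]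

lemma src_eq (τ : ℝ) (hτ : 0 < τ) :
    hcSrc τ = fun l => (2 / (Real.pi * τ)) * (1 + (τ⁻¹ * l) ^ 2)⁻¹ := by
  funext l
  have h1 : (0:ℝ) < τ ^ 2 + l ^ 2 := by positivity
  rw [hcSrc]
  field_simp

lemma src_integrable {τ : ℝ} (hτ : 0 < τ) : IntegrableOn (hcSrc τ) (Ioi (0:ℝ)) := by
  rw [src_eq τ hτ]
  apply Integrable.const_mul
  have := (integrableOn_Ioi_comp_mul_left_iff (fun u : ℝ => (1 + u ^ 2)⁻¹) 0
    (inv_pos.mpr hτ)).mpr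
  exact (by simpa using this integrable_inv_one_add_sq.integrableOn : IntegrableOn _ (Ioi (0:ℝ)))

lemma src_integral {τ : ℝ} (hτ : 0 < τ) : ∫ l in Ioi (0:ℝ), hcSrc τ l = 1 := by
  rw [src_eq τ hτ]
  rw [MeasureTheory.integral_const_mul]
  rw [
    integral_comp_mul_left_Ioi (fun u : ℝ => (1 + u ^ 2)⁻¹) 0 (inv_pos.mpr hτ)]
  simp only [mul_zero, integral_Ioi_inv_one_add_sq, Real.arctan_zero, sub_zero, inv_inv,
    smul_eq_mul]
  have hπ : Real.pi ≠ 0 := Real.pi_ne_zero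
  field_simp

lemma src_lintegral {τ : ℝ} (hτ : 0 < τ) :
    ∫⁻ l in Ioi (0:ℝ), ENNReal.ofReal (hcSrc τ l) = 1 := by
  rw [← ofReal_integral_eq_lintegral_ofReal (src_integrable hτ)
    (Filter.Eventually.of_forall fun l => by
      rw [hcSrc]; positivity), src_integral hτ, ENNReal.ofReal_one]

lemma tgt_lintegral {τ : ℝ} (hτ : 0 < τ) :
    ∫⁻ κ in Ioo (0:ℝ) 1, ENNReal.ofReal (hcTgt τ κ) = 1 := by
  have h := cov_key hτ (s := univ) MeasurableSet.univ
  rw [preimage_univ, inter_univ, inter_univ] at h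
  rw [h, src_lintegral hτ]

theorem half_cauchy_to_hb (τ : ℝ) (hτ : 0 < τ) :
    Measure.map (fun l : ℝ => 1 / (1 + l ^ 2))
        (volume.withDensity fun l =>
          ENNReal.ofReal ((Set.Ioi (0 : ℝ)).indicator
            (fun l => 2 * τ / (Real.pi * (τ ^ 2 + l ^ 2))) l)) =
      volume.withDensity (fun κ =>
        ENNReal.ofReal ((Set.Ioo (0 : ℝ) 1).indicator
          (fun κ => (Real.pi * τ)⁻¹ * κ ^ (-(1 : ℝ) / 2) * (1 - κ) ^ (-(1 : ℝ) / 2) *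
            (1 / τ ^ 2 + (1 - 1 / τ ^ 2) * κ)⁻¹) κ)) ∧
    hbC (1 / 2) (1 / 2) τ 0 = Real.pi * τ := by
  have hdl : (fun l => ENNReal.ofReal ((Set.Ioi (0:ℝ)).indicator
      (fun l => 2 * τ / (Real.pi * (τ ^ 2 + l ^ 2))) l))
      = fun l => (Ioi (0:ℝ)).indicator (fun l => ENNReal.ofReal (hcSrc τ l)) l := by
    funext l; by_cases h : l ∈ Ioi (0:ℝ) <;> simp [h, hcSrc]
  have hdr : (fun κ => ENNReal.ofReal ((Set.Ioo (0:ℝ) 1).indicator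
      (fun κ => (Real.pi * τ)⁻¹ * κ ^ (-(1 : ℝ) / 2) * (1 - κ) ^ (-(1 : ℝ) / 2) *
        (1 / τ ^ 2 + (1 - 1 / τ ^ 2) * κ)⁻¹) κ))
      = fun κ => (Ioo (0:ℝ) 1).indicator (fun κ => ENNReal.ofReal (hcTgt τ κ)) κ := by
    funext κ; by_cases h : κ ∈ Ioo (0:ℝ) 1 <;> simp [h, hcTgt]
  constructor
  · rw [hdl, hdr]
    refine Measure.ext fun s hs => ?_
    have hfm : Measurable fun l : ℝ => 1 / (1 + l ^ 2) := hcF_measurable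
    rw [Measure.map_apply hfm hs, withDensity_apply _ (hfm hs), withDensity_apply _ hs,
      lintegral_indicator measurableSet_Ioi, lintegral_indicator measurableSet_Ioo,
      Measure.restrict_restrict measurableSet_Ioi, Measure.restrict_restrict measurableSet_Ioo]
    exact (cov_key hτ hs).symm
  · have hK : ∀ κ : ℝ, hbKer (1/2) (1/2) τ 0 κ = (Real.pi * τ) * hcTgt τ κ := by
      intro κ
      have hπτ : Real.pi * τ ≠ 0 := by positivity
      have he : (-(0*κ) : ℝ) = 0 := by ring
      have ha : ((1:ℝ)/2 - 1) = -(1:ℝ)/2 := by norm_num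
      rw [hbKer, hcTgt, he, Real.exp_zero, ha, mul_one]
      set A := κ ^ (-(1:ℝ)/2)
      set B := (1-κ) ^ (-(1:ℝ)/2)
      set D := (1/τ^2 + (1 - 1/τ^2)*κ)⁻¹
      calc A * B * D = (Real.pi * τ * (Real.pi * τ)⁻¹) * (A * B * D) := by
            rw [mul_inv_cancel₀ hπτ, one_mul]
        _ = Real.pi * τ * ((Real.pi * τ)⁻¹ * A * B * D) := by ring
    have hnn : 0 ≤ᵐ[volume.restrict (Ioo (0:ℝ) 1)] hbKer (1/2) (1/2) τ 0 := by
      rw [Filter.EventuallyLE, ae_restrict_iff' measurableSet_Ioo]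
      filter_upwards with κ hκ
      rw [Pi.zero_apply, hK]
      have h1 : (0:ℝ) ≤ hcTgt τ κ := by
        rw [hcTgt]
        have hD : (0:ℝ) < 1 / τ ^ 2 + (1 - 1 / τ ^ 2) * κ := by
          have : 1 / τ ^ 2 + (1 - 1 / τ ^ 2) * κ = (1 - κ) / τ ^ 2 + κ := by field_simp; ring
          rw [this]
          have h4 : (0:ℝ) ≤ (1 - κ) / τ ^ 2 :=
            div_nonneg (by linarith [hκ.2]) (by positivity)
          linarith [hκ.1]
        have h2 : (0:ℝ) ≤ κ ^ (-(1:ℝ)/2) := Real.rpow_nonneg hκ.1.le _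
        have h3 : (0:ℝ) ≤ (1 - κ) ^ (-(1:ℝ)/2) := Real.rpow_nonneg (by linarith [hκ.2]) _
        positivity
      positivity
    have hmeas : AEStronglyMeasurable (hbKer (1/2) (1/2) τ 0)
        (volume.restrict (Ioo (0:ℝ) 1)) := by
      apply Measurable.aestronglyMeasurable
      unfold hbKer
      fun_prop
    rw [hbC, integral_eq_lintegral_of_nonneg_ae hnn hmeas]
    have hL : ∫⁻ κ in Ioo (0:ℝ) 1, ENNReal.ofReal (hbKer (1/2) (1/2) τ 0 κ)
        = ENNReal.ofReal (Real.pi * τ) := by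
      have : ∀ κ : ℝ, ENNReal.ofReal (hbKer (1/2) (1/2) τ 0 κ)
          = ENNReal.ofReal (Real.pi * τ) * ENNReal.ofReal (hcTgt τ κ) := by
        intro κ
        rw [hK, ENNReal.ofReal_mul (by positivity)]
      simp_rw [this]
      rw [lintegral_const_mul' _ _ ENNReal.ofReal_ne_top, tgt_lintegral hτ, mul_one]
    rw [hL, ENNReal.toReal_ofReal (by positivity)]
end
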